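/- In a dense block cycle of length ℓ ≥ 1 with block size d ≥ 1, every trajectory reaches a limit cycle within ℓ synchronous updates: for every state x, F^{2ℓ}(x) = F^{ℓ}(x). -/

import Mathlib

/-- The synchronous update map of a dense block cycle of length `ℓ` with block size `d`:
neuron `i` in block `j` becomes the sign of the sum of the previous block's states,
keeping its old state on a tie. -/
def hopfieldUpdate (ℓ d : ℕ) (x : ZMod ℓ → Fin d → ℤ) : ZMod ℓ → Fin d → ℤ :=
  fun j i => if (∑ i', x (j - 1) i') = 0 then x j i else Int.sign (∑ i', x (j - 1) i')

lemma hu_sum_step (ℓ d : ℕ) (hd : 1 ≤ d) (x : ZMod ℓ → Fin d → ℤ) (j : ZMod ℓ)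
    (h : (∑ i', x (j - 1) i') ≠ 0) : (∑ i', hopfieldUpdate ℓ d x j i') ≠ 0 := by
  have he : ∀ i : Fin d, hopfieldUpdate ℓ d x j i = Int.sign (∑ i', x (j - 1) i') := by
    intro i; simp [hopfieldUpdate, h]
  rw [Finset.sum_congr rfl (fun i _ => he i), Finset.sum_const]
  simp only [Finset.card_univ, Fintype.card_fin, nsmul_eq_mul]
  refine mul_ne_zero ?_ ?_
  · exact_mod_cast (by omega : d ≠ 0)
  · intro hs; exact h (Int.sign_eq_zero_iff_zero.mp hs)

lemma hu_sum_persist (ℓ d : ℕ) (hd : 1 ≤ d) (x : ZMod ℓ → Fin d → ℤ) (j : ZMod ℓ)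
    (h : (∑ i', x j i') ≠ 0) : (∑ i', hopfieldUpdate ℓ d x j i') ≠ 0 := by
  by_cases h0 : (∑ i', x (j - 1) i') = 0
  · have he : ∀ i : Fin d, hopfieldUpdate ℓ d x j i = x j i := by
      intro i; simp [hopfieldUpdate, h0]
    rw [Finset.sum_congr rfl (fun i _ => he i)]; exact h
  · exact hu_sum_step ℓ d hd x j h0

lemma hu_propagate (ℓ d : ℕ) (hd : 1 ≤ d) (x : ZMod ℓ → Fin d → ℤ) (j0 : ZMod ℓ)
    (h : (∑ i', x j0 i') ≠ 0) :
    ∀ t : ℕ, (∑ i', ((hopfieldUpdate ℓ d)^[t] x) (j0 + (t : ZMod ℓ)) i') ≠ 0 := by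
  intro t
  induction t with
  | zero => simpa using h
  | succ t ih =>
    rw [Function.iterate_succ_apply']
    have harg : (j0 + ((t + 1 : ℕ) : ZMod ℓ)) - 1 = j0 + (t : ZMod ℓ) := by push_cast; ring
    apply hu_sum_step ℓ d hd
    rw [harg]; exact ih

lemma hu_persist_many (ℓ d : ℕ) (hd : 1 ≤ d) (x : ZMod ℓ → Fin d → ℤ) (j : ZMod ℓ)
    (h : (∑ i', x j i') ≠ 0) :
    ∀ k : ℕ, (∑ i', ((hopfieldUpdate ℓ d)^[k] x) j i') ≠ 0 := by
  intro k
  induction k with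
  | zero => simpa using h
  | succ k ih =>
    rw [Function.iterate_succ_apply']
    exact hu_sum_persist ℓ d hd _ j ih

lemma hu_rot_one (ℓ d : ℕ) (hd : 1 ≤ d) (ε : ZMod ℓ → ℤ)
    (hε : ∀ j, ε j = 1 ∨ ε j = -1) :
    hopfieldUpdate ℓ d (fun j _ => ε j) = fun j _ => ε (j - 1) := by
  funext j i
  have hs : (∑ _i' : Fin d, ε (j - 1)) = (d : ℤ) * ε (j - 1) := by
    rw [Finset.sum_const]; simp [nsmul_eq_mul]
  have hdpos : (0 : ℤ) < (d : ℤ) := by exact_mod_cast (by omega : 0 < d)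
  have hne : (d : ℤ) * ε (j - 1) ≠ 0 := by
    refine mul_ne_zero (by positivity) ?_
    rcases hε (j - 1) with h | h <;> rw [h] <;> norm_num
  simp only [hopfieldUpdate, hs, if_neg hne]
  rcases hε (j - 1) with h | h <;> rw [h]
  · rw [mul_one, Int.sign_eq_one_iff_pos.mpr hdpos]
  · rw [mul_neg_one, Int.sign_eq_neg_one_iff_neg.mpr (by linarith)]

lemma hu_rot (ℓ d : ℕ) (hd : 1 ≤ d) (ε : ZMod ℓ → ℤ)
    (hε : ∀ j, ε j = 1 ∨ ε j = -1) :
    ∀ t : ℕ, (hopfieldUpdate ℓ d)^[t] (fun j _ => ε j) = fun j _ => ε (j - (t : ZMod ℓ)) := by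
  intro t
  induction t with
  | zero => simp
  | succ t ih =>
    rw [Function.iterate_succ_apply']
    rw [ih, hu_rot_one ℓ d hd (fun j => ε (j - (t : ZMod ℓ))) (fun j => hε _)]
    funext j i
    congr 1
    push_cast
    ring

/-- In a dense block cycle of length `ℓ ≥ 1` with block size `d ≥ 1`, every
`±1`-valued trajectory reaches a limit cycle within `ℓ` synchronous updates:
`F^{2ℓ}(x) = F^{ℓ}(x)`. -/
theorem stmt12 (ℓ d : ℕ) (hℓ : 1 ≤ ℓ) (hd : 1 ≤ d) (x : ZMod ℓ → Fin d → ℤ)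
    (hx : ∀ j i, x j i = 1 ∨ x j i = -1) :
    (hopfieldUpdate ℓ d)^[2 * ℓ] x = (hopfieldUpdate ℓ d)^[ℓ] x := by
  haveI : NeZero ℓ := ⟨by omega⟩
  by_cases hall : ∀ j : ZMod ℓ, (∑ i', x j i') = 0
  · -- all sums zero: x is a fixed point
    have hfix : hopfieldUpdate ℓ d x = x := by
      funext j i; simp [hopfieldUpdate, hall (j - 1)]
    rw [Function.iterate_fixed hfix, Function.iterate_fixed hfix]
  · push_neg at hall
    obtain ⟨j0, hj0⟩ := hall
    -- at time ℓ - 1 every block has nonzero sum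
    have hall' : ∀ j : ZMod ℓ, (∑ i', ((hopfieldUpdate ℓ d)^[ℓ - 1] x) j i') ≠ 0 := by
      intro j
      set t : ℕ := (j - j0).val with ht
      have htlt : t < ℓ := ZMod.val_lt _
      have hjt : j0 + (t : ZMod ℓ) = j := by
        rw [ht, ZMod.natCast_val, ZMod.cast_id]; ring
      have h1 := hu_propagate ℓ d hd x j0 hj0 t
      rw [hjt] at h1
      have h2 := hu_persist_many ℓ d hd _ j h1 (ℓ - 1 - t)
      rwa [← Function.iterate_add_apply, (by omega : ℓ - 1 - t + t = ℓ - 1)] at h2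
    -- the state at time ℓ is block-constant ±1
    obtain ⟨m, rfl⟩ : ∃ m, ℓ = m + 1 := ⟨ℓ - 1, by omega⟩
    set z := (hopfieldUpdate (m + 1) d)^[m] x with hz
    have hm : m + 1 - 1 = m := by omega
    rw [hm] at hall'
    set ε : ZMod (m + 1) → ℤ := fun j => Int.sign (∑ i', z (j - 1) i') with hε
    have hεpm : ∀ j, ε j = 1 ∨ ε j = -1 := by
      intro j
      rcases lt_trichotomy (∑ i', z (j - 1) i') 0 with h | h | h
      · right; exact Int.sign_eq_neg_one_iff_neg.mpr h
      · exact absurd h (hall' _)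
      · left; exact Int.sign_eq_one_iff_pos.mpr h
    have hy : (hopfieldUpdate (m + 1) d)^[m + 1] x = fun j _ => ε j := by
      rw [Function.iterate_succ_apply', ← hz]
      funext j i
      simp [hopfieldUpdate, show (∑ i', z (j - 1) i') ≠ 0 from hall' (j - 1), hε]
    rw [two_mul, Function.iterate_add_apply, hy,
      hu_rot (m + 1) d hd ε hεpm (m + 1)]
    funext j i
    congr 1
    simp
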